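/- Let X → Y ← Z be a cospan of groupoids (or spaces) with pullback P and p ∈ P. The fiber of π₀(P) → π₀(X) × π₀(Z) over the image of p is in bijection with the double coset set π₁(Z,p) \ π₁(Y,p) / π₁(X,p), where the groups act via the induced maps to π₁(Y,p). -/

import Mathlib

universe v₁ v₂ v₃ u₁ u₂ u₃

open CategoryTheory

namespace Stmt6Aux

lemma zig_hom {C : Type*} [Category C] (hinv : ∀ {a b : C}, (a ⟶ b) → (b ⟶ a))
    {a b : C} (h : Zigzag a b) : Nonempty (a ⟶ b) := by
  induction h with
  | refl => exact ⟨𝟙 _⟩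
  | tail _ hz ih =>
    obtain ⟨f⟩ := ih
    rcases hz with ⟨g⟩ | ⟨g⟩
    · exact ⟨f ≫ g.some⟩
    · exact ⟨f ≫ hinv g.some⟩

variable {X : Type u₁} [Groupoid.{v₁} X] {Y : Type u₂} [Groupoid.{v₂} Y]
    {Z : Type u₃} [Groupoid.{v₃} Z] (φ : X ⥤ Y) (ψ : Z ⥤ Y) (p : Comma φ ψ)

/-- inverse of a comma morphism between groupoids -/
def commaInv {A B : Comma φ ψ} (m : A ⟶ B) : B ⟶ A where
  left := Groupoid.inv m.left
  right := Groupoid.inv m.right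
  w := by
    have := m.w
    simp only [Groupoid.inv_eq_inv, Functor.map_inv]
    rw [IsIso.inv_comp_eq, ← Category.assoc, this, Category.assoc, IsIso.hom_inv_id,
      Category.comp_id]

lemma comma_zigzag_hom {A B : Comma φ ψ} (h : Zigzag A B) : Nonempty (A ⟶ B) :=
  zig_hom (fun m => commaInv φ ψ m) h


/-- the subgroup `π₁(Z,p)` inside `π₁(Y, φ p.left)` -/
def Ksub : Subgroup (Aut (φ.obj p.left)) where
  carrier := Set.range (fun k => asIso p.hom ≪≫ ψ.mapIso k ≪≫ (asIso p.hom).symm :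
    Aut p.right → Aut (φ.obj p.left))
  one_mem' := ⟨1, by
    apply Iso.ext
    show p.hom ≫ ψ.map (𝟙 _) ≫ inv p.hom = 𝟙 _
    simp⟩
  mul_mem' := by
    rintro a b ⟨k1, rfl⟩ ⟨k2, rfl⟩
    refine ⟨k1 * k2, ?_⟩
    apply Iso.ext
    show p.hom ≫ ψ.map (k2.hom ≫ k1.hom) ≫ inv p.hom =
      (p.hom ≫ ψ.map k2.hom ≫ inv p.hom) ≫ p.hom ≫ ψ.map k1.hom ≫ inv p.hom
    simp
  inv_mem' := by
    rintro a ⟨k, rfl⟩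
    refine ⟨k⁻¹, ?_⟩
    apply Iso.ext
    show p.hom ≫ ψ.map k.inv ≫ inv p.hom = (asIso p.hom ≪≫ ψ.mapIso k ≪≫ (asIso p.hom).symm).inv
    simp [Aut.Aut_inv_def]
    rfl

/-- the subgroup `π₁(X,p)` inside `π₁(Y, φ p.left)` -/
def Hsub : Subgroup (Aut (φ.obj p.left)) where
  carrier := Set.range (fun h => φ.mapIso h : Aut p.left → Aut (φ.obj p.left))
  one_mem' := ⟨1, by apply Iso.ext; show φ.map (𝟙 _) = 𝟙 _; simp⟩
  mul_mem' := by
    rintro a b ⟨h1, rfl⟩ ⟨h2, rfl⟩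
    exact ⟨h1 * h2, by apply Iso.ext; show φ.map (h2.hom ≫ h1.hom) = φ.map h2.hom ≫ φ.map h1.hom; simp⟩
  inv_mem' := by
    rintro a ⟨h, rfl⟩
    exact ⟨h⁻¹, by apply Iso.ext; rfl⟩

/-- the comma object attached to `g` -/
def obj (g : Aut (φ.obj p.left)) : Comma φ ψ where
  left := p.left
  right := p.right
  hom := g.hom ≫ p.hom

attribute [reducible] obj


lemma key (g1 g2 : Aut (φ.obj p.left)) :
    (Quotient.mk (Zigzag.setoid _) (obj φ ψ p g1) = Quotient.mk _ (obj φ ψ p g2)) ↔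
      DoubleCoset.mk (Ksub φ ψ p) (Hsub φ ψ p) g1 = DoubleCoset.mk _ _ g2 := by
  rw [DoubleCoset.eq]
  constructor
  · intro h
    obtain ⟨m⟩ := comma_zigzag_hom φ ψ (Quotient.exact h)
    have hw : φ.map m.left ≫ g2.hom ≫ p.hom = (g1.hom ≫ p.hom) ≫ ψ.map m.right := by
      simpa [obj] using m.w
    refine ⟨asIso p.hom ≪≫ ψ.mapIso (asIso m.right) ≪≫ (asIso p.hom).symm, ⟨asIso m.right, rfl⟩,
      φ.mapIso ((asIso m.left).symm), ⟨(asIso m.left).symm, rfl⟩, ?_⟩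
    apply Aut.ext
    show g2.hom = φ.map (inv m.left) ≫ g1.hom ≫ p.hom ≫ ψ.map m.right ≫ inv p.hom
    rw [← cancel_mono p.hom, ← cancel_epi (φ.map m.left), hw]
    simp
  · rintro ⟨a, ⟨k, rfl⟩, b, ⟨h, rfl⟩, hg⟩
    have hg' : g2.hom = φ.map h.hom ≫ g1.hom ≫ p.hom ≫ ψ.map k.hom ≫ inv p.hom := by
      rw [hg]; rfl
    refine Quotient.sound (Zigzag.of_hom (?_ : obj φ ψ p g1 ⟶ obj φ ψ p g2))
    refine ⟨h.inv, k.hom, ?_⟩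
    show φ.map h.inv ≫ g2.hom ≫ p.hom = (g1.hom ≫ p.hom) ≫ ψ.map k.hom
    rw [hg']
    simp
    exact Iso.inv_hom_id_assoc (φ.mapIso h) _

end Stmt6Aux

/-- For a cospan of groupoids `X ⥤ Y ⥦ Z` with (homotopy) pullback the comma category
`Comma φ ψ`, and a point `p` of the pullback, the fiber of `π₀(P) → π₀(X) × π₀(Z)` over the
image of `p` is in bijection with the double coset set `π₁(Z,p) \ π₁(Y,p) / π₁(X,p)`, where
`π₁(Y,p)` is taken at the basepoint `φ(p.left)` and the groups act via the induced maps. -/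
theorem stmt_6 {X : Type u₁} [Groupoid.{v₁} X] {Y : Type u₂} [Groupoid.{v₂} Y]
    {Z : Type u₃} [Groupoid.{v₃} Z] (φ : X ⥤ Y) (ψ : Z ⥤ Y) (p : Comma φ ψ) :
    Nonempty
      ({c : ConnectedComponents (Comma φ ψ) //
          (Comma.fst φ ψ).mapConnectedComponents c = Quotient.mk _ p.left ∧
          (Comma.snd φ ψ).mapConnectedComponents c = Quotient.mk _ p.right} ≃
        DoubleCoset.Quotient (G := Aut (φ.obj p.left))
          (Set.range (fun k => asIso p.hom ≪≫ ψ.mapIso k ≪≫ (asIso p.hom).symm :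
            Aut p.right → Aut (φ.obj p.left)))
          (Set.range (fun h => φ.mapIso h : Aut p.left → Aut (φ.obj p.left)))) := by
  refine Nonempty.intro (Equiv.symm (Equiv.ofBijective
    (Quotient.lift (fun g => ⟨Quotient.mk _ (Stmt6Aux.obj φ ψ p g), rfl, rfl⟩)
      (fun g1 g2 h =>
        Subtype.ext ((Stmt6Aux.key φ ψ p g1 g2).mpr (Quotient.sound h)))) ?_))
  constructor
  · intro c1 c2
    obtain ⟨g1, rfl⟩ := Quotient.exists_rep c1
    obtain ⟨g2, rfl⟩ := Quotient.exists_rep c2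
    intro h
    exact (Stmt6Aux.key φ ψ p g1 g2).mp (congrArg Subtype.val h)
  · rintro ⟨c, h1, h2⟩
    obtain ⟨q, rfl⟩ := Quotient.exists_rep c
    rw [Functor.mapConnectedComponents_mk] at h1 h2
    obtain ⟨u⟩ := Stmt6Aux.zig_hom (fun f => Groupoid.inv f) (Quotient.exact h1)
    obtain ⟨v⟩ := Stmt6Aux.zig_hom (fun f => Groupoid.inv f) (Quotient.exact h2)
    refine ⟨Quotient.mk _ (asIso (φ.map (Groupoid.inv u) ≫ q.hom ≫ ψ.map v ≫ inv p.hom)), ?_⟩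
    apply Subtype.ext
    show Quotient.mk _ (Stmt6Aux.obj φ ψ p _) = Quotient.mk _ q
    refine (Quotient.sound (Zigzag.of_hom (?_ : q ⟶ Stmt6Aux.obj φ ψ p _))).symm
    refine ⟨u, v, ?_⟩
    show φ.map u ≫ (φ.map (Groupoid.inv u) ≫ q.hom ≫ ψ.map v ≫ inv p.hom) ≫ p.hom =
      q.hom ≫ ψ.map v
    simp [Groupoid.inv_eq_inv]
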